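/- Let 0 < γ < 1, K > 0, and let l = ⌊1/γ − 1⌋ + 1. If l ≤ K and γK ≥ 1, then (1/γ)·∫_1^∞ exp(−K·u)·u^{1/γ−1} du ≤ (l+1)·exp(−K). -/

import Mathlib

open MeasureTheory Real Set Filter

lemma aux_integrable {K : ℝ} (hK : 0 < K) (n : ℕ) :
    IntegrableOn (fun u : ℝ => Real.exp (-K * u) * u ^ n) (Set.Ioi 1) := by
  have h := integrableOn_rpow_mul_exp_neg_mul_rpow (p := 1) (s := (n : ℝ)) (b := K)
    (by exact neg_one_lt_zero.trans_le (Nat.cast_nonneg n)) one_pos hK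
  have h2 : IntegrableOn (fun x : ℝ => x ^ (n : ℝ) * Real.exp (-K * x ^ (1 : ℝ)))
      (Set.Ioi 1) := h.mono_set (Set.Ioi_subset_Ioi (by norm_num))
  refine h2.congr_fun ?_ measurableSet_Ioi
  intro x hx
  simp [Real.rpow_one, Real.rpow_natCast, mul_comm]

lemma aux_tendsto {K : ℝ} (hK : 0 < K) (n : ℕ) :
    Tendsto (fun u : ℝ => -(Real.exp (-K * u) * u ^ n) / K) atTop (nhds 0) := by
  have h := tendsto_rpow_mul_exp_neg_mul_atTop_nhds_zero (n : ℝ) K hK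
  have h2 : Tendsto (fun u : ℝ => Real.exp (-K * u) * u ^ n) atTop (nhds 0) := by
    refine h.congr' ?_
    filter_upwards [eventually_gt_atTop (0 : ℝ)] with x hx
    rw [Real.rpow_natCast, mul_comm]
  have := (h2.neg).div_const K
  simpa using this

lemma aux_deriv_exp {K : ℝ} (x : ℝ) :
    HasDerivAt (fun u : ℝ => Real.exp (-K * u)) (-K * Real.exp (-K * x)) x := by
  simpa [mul_comm] using ((hasDerivAt_id x).const_mul (-K)).exp

lemma aux_ftc {K : ℝ} (hK : 0 < K) (n : ℕ) :
    ∫ u in Set.Ioi (1 : ℝ), (Real.exp (-K * u) * u ^ (n + 1)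
        - ((n : ℝ) + 1) / K * (Real.exp (-K * u) * u ^ n)) = Real.exp (-K) / K := by
  have hderiv : ∀ x ∈ Set.Ici (1 : ℝ), HasDerivAt
      (fun u : ℝ => -(Real.exp (-K * u) * u ^ (n + 1)) / K)
      (Real.exp (-K * x) * x ^ (n + 1) - ((n : ℝ) + 1) / K * (Real.exp (-K * x) * x ^ n)) x := by
    intro x _
    have h2 : HasDerivAt (fun u : ℝ => u ^ (n + 1)) (((n : ℝ) + 1) * x ^ n) x := by
      simpa [Nat.cast_add] using hasDerivAt_pow (n + 1) x
    have h3 := ((aux_deriv_exp (K := K) x).mul h2).neg.div_const K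
    refine h3.congr_deriv ?_
    field_simp
    ring
  have hint : IntegrableOn (fun u : ℝ => Real.exp (-K * u) * u ^ (n + 1)
      - ((n : ℝ) + 1) / K * (Real.exp (-K * u) * u ^ n)) (Set.Ioi 1) :=
    (aux_integrable hK (n + 1)).sub ((aux_integrable hK n).const_mul (((n : ℝ) + 1) / K))
  have := integral_Ioi_of_hasDerivAt_of_tendsto' hderiv hint (aux_tendsto hK (n + 1))
  rw [this]
  simp [neg_div]

lemma aux_bound {K : ℝ} (hK : 0 < K) :
    ∀ n : ℕ, (n : ℝ) ≤ K →
      ∫ u in Set.Ioi (1 : ℝ), Real.exp (-K * u) * u ^ n ≤ ((n : ℝ) + 1) * Real.exp (-K) / K := by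
  intro n
  induction n with
  | zero =>
    intro _
    have hderiv : ∀ x ∈ Set.Ici (1 : ℝ), HasDerivAt
        (fun u : ℝ => -Real.exp (-K * u) / K) (Real.exp (-K * x) * x ^ (0 : ℕ)) x := by
      intro x _
      have := (aux_deriv_exp (K := K) x).neg.div_const K
      refine this.congr_deriv ?_
      field_simp
    have hint : IntegrableOn (fun u : ℝ => Real.exp (-K * u) * u ^ (0 : ℕ)) (Set.Ioi 1) :=
      aux_integrable hK 0
    have ht : Tendsto (fun u : ℝ => -Real.exp (-K * u) / K) atTop (nhds 0) := by
      simpa using aux_tendsto hK 0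
    have h := integral_Ioi_of_hasDerivAt_of_tendsto' hderiv hint ht
    rw [h]
    norm_num [neg_div]
  | succ n ih =>
    intro hn
    have hn1 : (n : ℝ) + 1 ≤ K := by push_cast at hn; linarith
    have hn' : (n : ℝ) ≤ K := by linarith
    have hIH := ih hn'
    have h := aux_ftc hK n
    rw [integral_sub (aux_integrable hK (n + 1))
      ((aux_integrable hK n).const_mul (((n : ℝ) + 1) / K)),
      MeasureTheory.integral_const_mul] at h
    have hc0 : (0 : ℝ) ≤ ((n : ℝ) + 1) / K := by positivity
    have hc1 : ((n : ℝ) + 1) / K ≤ 1 := by rw [div_le_one hK]; linarith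
    have hB : (0 : ℝ) ≤ ((n : ℝ) + 1) * Real.exp (-K) / K := by positivity
    have h4 : ((n : ℝ) + 1) / K * (∫ u in Set.Ioi (1 : ℝ), Real.exp (-K * u) * u ^ n)
        ≤ ((n : ℝ) + 1) * Real.exp (-K) / K := by
      calc ((n : ℝ) + 1) / K * (∫ u in Set.Ioi (1 : ℝ), Real.exp (-K * u) * u ^ n)
          ≤ ((n : ℝ) + 1) / K * (((n : ℝ) + 1) * Real.exp (-K) / K) :=
            mul_le_mul_of_nonneg_left hIH hc0
        _ ≤ 1 * (((n : ℝ) + 1) * Real.exp (-K) / K) := mul_le_mul_of_nonneg_right hc1 hB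
        _ = ((n : ℝ) + 1) * Real.exp (-K) / K := one_mul _
    have key : ∫ u in Set.Ioi (1 : ℝ), Real.exp (-K * u) * u ^ (n + 1)
        = Real.exp (-K) / K
          + ((n : ℝ) + 1) / K * (∫ u in Set.Ioi (1 : ℝ), Real.exp (-K * u) * u ^ n) := by
      linarith
    rw [key]
    push_cast
    have hring : ((n : ℝ) + 1 + 1) * Real.exp (-K) / K
        = Real.exp (-K) / K + ((n : ℝ) + 1) * Real.exp (-K) / K := by ring
    linarith

open MeasureTheory Real

/-- For `0 < γ < 1`, `K > 0`, `l = ⌊1/γ - 1⌋ + 1` with `l ≤ K` and `γK ≥ 1`,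
`(1/γ) ∫_1^∞ exp(-Ku) u^{1/γ-1} du ≤ (l+1) exp(-K)`. -/
theorem stmt_7 (γ K : ℝ) (hγ0 : 0 < γ) (hγ1 : γ < 1) (hK : 0 < K)
    (l : ℕ) (hl : l = ⌊1 / γ - 1⌋₊ + 1) (hlK : (l : ℝ) ≤ K) (hγK : 1 ≤ γ * K) :
    (1 / γ) * (∫ u in Set.Ioi (1 : ℝ), Real.exp (-K * u) * u ^ (1 / γ - 1)) ≤
      ((l : ℝ) + 1) * Real.exp (-K) := by
  have hexp : 1 / γ - 1 ≤ (l : ℝ) := by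
    have h0 : (0 : ℝ) ≤ 1 / γ - 1 := by
      rw [sub_nonneg, le_div_iff₀ hγ0]
      linarith
    have := Nat.lt_floor_add_one (1 / γ - 1)
    rw [hl]
    push_cast
    linarith
  have hmono : ∫ u in Set.Ioi (1 : ℝ), Real.exp (-K * u) * u ^ (1 / γ - 1) ≤
      ∫ u in Set.Ioi (1 : ℝ), Real.exp (-K * u) * u ^ l := by
    refine integral_mono_of_nonneg ?_ (aux_integrable hK l) ?_
    · filter_upwards [ae_restrict_mem measurableSet_Ioi] with x hx
      have hx1 : (0 : ℝ) < x := lt_trans one_pos hx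
      positivity
    · filter_upwards [ae_restrict_mem measurableSet_Ioi] with x hx
      have hx1 : (1 : ℝ) ≤ x := le_of_lt hx
      have hp : x ^ (1 / γ - 1) ≤ x ^ (l : ℕ) := by
        rw [← Real.rpow_natCast x l]
        exact Real.rpow_le_rpow_of_exponent_le hx1 hexp
      exact mul_le_mul_of_nonneg_left hp (Real.exp_pos _).le
  have hb := aux_bound hK l hlK
  have hγK' : 1 / γ ≤ K := by
    rw [div_le_iff₀ hγ0]
    linarith [hγK]
  calc (1 / γ) * (∫ u in Set.Ioi (1 : ℝ), Real.exp (-K * u) * u ^ (1 / γ - 1))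
      ≤ (1 / γ) * (((l : ℝ) + 1) * Real.exp (-K) / K) := by
        apply mul_le_mul_of_nonneg_left (le_trans hmono hb) (by positivity)
    _ ≤ K * (((l : ℝ) + 1) * Real.exp (-K) / K) := by
        apply mul_le_mul_of_nonneg_right hγK' (by positivity)
    _ = ((l : ℝ) + 1) * Real.exp (-K) := by field_simp
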